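/- Let edges of K_n be ordered lexicographically: (i,j) < (k,l) iff min(i,j) < min(k,l), or min(i,j)=min(k,l) and max(i,j) < max(k,l). For a graph G on [n] and an edge e=(i,j) of K_n, say e is G-active if there is a path in G^{>e} (the spanning subgraph of G consisting of edges strictly greater than e) connecting i and j. Define Ψ(G) = G if no edge is G-active, and Ψ(G) = G ⊕ e*_G otherwise, where e*_G is the least G-active edge and ⊕ toggles membership of that edge. Then Ψ maps connected graphs to connected graphs and Ψ is an involution: Ψ(Ψ(G)) = G for every connected graph G on [n]. -/

import Mathlib

open scoped Classical

noncomputable section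

/-- The lexicographic key of the edge `{a, b}` of the complete graph on `Fin n`:
the pair `(min a b, max a b)` with the lexicographic order. -/
def edgeKey {n : ℕ} (a b : Fin n) : Fin n ×ₗ Fin n := toLex (min a b, max a b)

/-- The spanning subgraph `G^{>e}` of `G` consisting of the edges strictly greater
than `e` in the lexicographic order. -/
def aboveEdge {n : ℕ} (G : SimpleGraph (Fin n)) (e : Fin n ×ₗ Fin n) :
    SimpleGraph (Fin n) where
  Adj a b := G.Adj a b ∧ e < edgeKey a b
  symm := by
    constructor
    intro a b hab
    refine ⟨hab.1.symm, ?_⟩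
    have : edgeKey a b = edgeKey b a := by
      unfold edgeKey; rw [min_comm a b, max_comm a b]
    rw [← this]; exact hab.2
  loopless := ⟨fun a ha => G.loopless.irrefl a ha.1⟩

/-- An edge `e = (i, j)` of `K_n` (with `i < j`) is `G`-active if `i` and `j` are joined
by a path in `G^{>e}`. -/
def IsActive {n : ℕ} (G : SimpleGraph (Fin n)) (e : Fin n ×ₗ Fin n) : Prop :=
  (ofLex e).1 < (ofLex e).2 ∧ (aboveEdge G e).Reachable (ofLex e).1 (ofLex e).2

instance {n : ℕ} : Fintype (Fin n ×ₗ Fin n) := Fintype.ofEquiv (Fin n × Fin n) toLex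

/-- The finset of `G`-active edges. -/
def activeEdges {n : ℕ} (G : SimpleGraph (Fin n)) : Finset (Fin n ×ₗ Fin n) :=
  Finset.univ.filter (IsActive G)

/-- `G ⊕ e`: toggle the edge `e` (delete it if present, add it otherwise). -/
def toggleEdge {n : ℕ} (G : SimpleGraph (Fin n)) (e : Fin n ×ₗ Fin n) :
    SimpleGraph (Fin n) :=
  if G.Adj (ofLex e).1 (ofLex e).2 then G.deleteEdges {s((ofLex e).1, (ofLex e).2)}
  else G ⊔ SimpleGraph.fromEdgeSet {s((ofLex e).1, (ofLex e).2)}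

/-- The map `Ψ`: toggle the least `G`-active edge, if any. -/
def Psi {n : ℕ} (G : SimpleGraph (Fin n)) : SimpleGraph (Fin n) :=
  if h : (activeEdges G).Nonempty then toggleEdge G ((activeEdges G).min' h) else G

end

section Aux

variable {n : ℕ}

lemma sym2_minmax (a b : Fin n) : s(min a b, max a b) = s(a, b) := by
  rcases le_total a b with h | h
  · rw [min_eq_left h, max_eq_right h]
  · rw [min_eq_right h, max_eq_left h, Sym2.eq_swap]

lemma edgeKey_eq_iff (a b c d : Fin n) :
    edgeKey a b = edgeKey c d ↔ s(a, b) = s(c, d) := by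
  constructor
  · intro h
    unfold edgeKey at h
    rw [toLex_inj, Prod.mk.injEq] at h
    rw [← sym2_minmax a b, ← sym2_minmax c d, h.1, h.2]
  · intro h
    rw [Sym2.eq_iff] at h
    rcases h with ⟨rfl, rfl⟩ | ⟨rfl, rfl⟩
    · rfl
    · unfold edgeKey; rw [min_comm, max_comm]

lemma edgeKey_self {e : Fin n ×ₗ Fin n} (hlt : (ofLex e).1 < (ofLex e).2) :
    edgeKey (ofLex e).1 (ofLex e).2 = e := by
  unfold edgeKey
  rw [min_eq_left hlt.le, max_eq_right hlt.le]
  exact toLex_ofLex e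

lemma toggle_adj_of_ne {G : SimpleGraph (Fin n)} {e : Fin n ×ₗ Fin n}
    (hlt : (ofLex e).1 < (ofLex e).2) {a b : Fin n} (hk : edgeKey a b ≠ e) :
    (toggleEdge G e).Adj a b ↔ G.Adj a b := by
  have hs : s(a, b) ≠ s((ofLex e).1, (ofLex e).2) := by
    intro h
    exact hk (((edgeKey_eq_iff a b _ _).mpr h).trans (edgeKey_self hlt))
  unfold toggleEdge
  split_ifs with h
  · simp [SimpleGraph.deleteEdges_adj, hs]
  · simp only [SimpleGraph.sup_adj, SimpleGraph.fromEdgeSet_adj, Set.mem_singleton_iff]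
    constructor
    · rintro (h' | ⟨h', _⟩)
      · exact h'
      · exact absurd h' hs
    · exact Or.inl

lemma toggle_adj_self {G : SimpleGraph (Fin n)} {e : Fin n ×ₗ Fin n}
    (hlt : (ofLex e).1 < (ofLex e).2) :
    (toggleEdge G e).Adj (ofLex e).1 (ofLex e).2 ↔ ¬ G.Adj (ofLex e).1 (ofLex e).2 := by
  unfold toggleEdge
  split_ifs with h
  · simp [SimpleGraph.deleteEdges_adj, h]
  · simp [SimpleGraph.fromEdgeSet_adj, h, hlt.ne]

lemma toggle_toggle {G : SimpleGraph (Fin n)} {e : Fin n ×ₗ Fin n}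
    (hlt : (ofLex e).1 < (ofLex e).2) :
    toggleEdge (toggleEdge G e) e = G := by
  ext a b
  by_cases hk : edgeKey a b = e
  · have hs : s(a, b) = s((ofLex e).1, (ofLex e).2) :=
      (edgeKey_eq_iff a b _ _).mp (hk.trans (edgeKey_self hlt).symm)
    rw [Sym2.eq_iff] at hs
    rcases hs with ⟨rfl, rfl⟩ | ⟨rfl, rfl⟩
    · rw [toggle_adj_self hlt, toggle_adj_self hlt, not_not]
    · rw [SimpleGraph.adj_comm, SimpleGraph.adj_comm G]
      rw [toggle_adj_self hlt, toggle_adj_self hlt, not_not]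
  · rw [toggle_adj_of_ne hlt hk, toggle_adj_of_ne hlt hk]

lemma aboveEdge_toggle_self {G : SimpleGraph (Fin n)} {e : Fin n ×ₗ Fin n}
    (hlt : (ofLex e).1 < (ofLex e).2) :
    aboveEdge (toggleEdge G e) e = aboveEdge G e := by
  ext a b
  show (toggleEdge G e).Adj a b ∧ e < edgeKey a b ↔ G.Adj a b ∧ e < edgeKey a b
  constructor
  · rintro ⟨h1, h2⟩
    exact ⟨(toggle_adj_of_ne hlt h2.ne').mp h1, h2⟩
  · rintro ⟨h1, h2⟩
    exact ⟨(toggle_adj_of_ne hlt h2.ne').mpr h1, h2⟩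

lemma aboveEdge_mono {G : SimpleGraph (Fin n)} {e f : Fin n ×ₗ Fin n} (h : f ≤ e) :
    aboveEdge G e ≤ aboveEdge G f := by
  rintro a b ⟨h1, h2⟩
  exact ⟨h1, lt_of_le_of_lt h h2⟩

lemma aboveEdge_le {G : SimpleGraph (Fin n)} {e : Fin n ×ₗ Fin n} :
    aboveEdge G e ≤ G := fun {a b} h => h.1

lemma mem_activeEdges {G : SimpleGraph (Fin n)} {f : Fin n ×ₗ Fin n} :
    f ∈ activeEdges G ↔ IsActive G f := by
  unfold activeEdges
  exact Finset.mem_filter.trans (and_iff_right (Finset.mem_univ _))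

lemma reach_transfer {V : Type*} {H K : SimpleGraph V} {i j : V}
    (hij : K.Reachable i j)
    (h : ∀ a b, H.Adj a b → K.Adj a b ∨ s(a, b) = s(i, j)) :
    ∀ {u v : V}, H.Reachable u v → K.Reachable u v := by
  intro u v huv
  obtain ⟨w⟩ := huv
  induction w with
  | nil => exact SimpleGraph.Reachable.refl _
  | cons h' p ih =>
    rcases h _ _ h' with hk | hs
    · exact hk.reachable.trans ih
    · rw [Sym2.eq_iff] at hs
      rcases hs with ⟨rfl, rfl⟩ | ⟨rfl, rfl⟩
      · exact hij.trans ih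
      · exact hij.symm.trans ih

end Aux

/-- `Ψ` maps connected graphs to connected graphs and is an involution on connected graphs. -/
theorem psi_involution {n : ℕ} (G : SimpleGraph (Fin n)) (hG : G.Connected) :
    (Psi G).Connected ∧ Psi (Psi G) = G := by
  by_cases h : (activeEdges G).Nonempty
  · set e := (activeEdges G).min' h with he_def
    have heA : IsActive G e := mem_activeEdges.mp ((activeEdges G).min'_mem h)
    obtain ⟨hlt, hreach⟩ := heA
    have hPsi : Psi G = toggleEdge G e := dif_pos h
    set G' := toggleEdge G e with hG'
    -- i j reachable in G'
    have hreach' : (aboveEdge G' e).Reachable (ofLex e).1 (ofLex e).2 := by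
      rw [hG', aboveEdge_toggle_self hlt]; exact hreach
    have hij : G'.Reachable (ofLex e).1 (ofLex e).2 :=
      hreach'.mono aboveEdge_le
    -- G' connected
    have hconn : G'.Connected := by
      have hpre : ∀ u v, G'.Reachable u v := by
        intro u v
        refine reach_transfer hij ?_ (hG.preconnected u v)
        intro a b hab
        by_cases hk : edgeKey a b = e
        · exact Or.inr ((edgeKey_eq_iff a b _ _).mp (hk.trans (edgeKey_self hlt).symm))
        · exact Or.inl ((toggle_adj_of_ne hlt hk).mpr hab)
      have : Nonempty (Fin n) := hG.nonempty
      exact ⟨hpre⟩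
    -- e is G'-active
    have heA' : e ∈ activeEdges G' := mem_activeEdges.mpr ⟨hlt, hreach'⟩
    have h' : (activeEdges G').Nonempty := ⟨e, heA'⟩
    -- no f < e is G'-active
    have hmin : (activeEdges G').min' h' = e := by
      refine le_antisymm (Finset.min'_le _ _ heA') ?_
      refine Finset.le_min' _ _ _ ?_
      intro f hf
      by_contra hfe
      push_neg at hfe
      obtain ⟨hflt, hfreach⟩ := mem_activeEdges.mp hf
      -- transfer reachability from aboveEdge G' f to aboveEdge G f
      have hijf : (aboveEdge G f).Reachable (ofLex e).1 (ofLex e).2 :=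
        hreach.mono (aboveEdge_mono hfe.le)
      have hfG : (aboveEdge G f).Reachable (ofLex f).1 (ofLex f).2 := by
        refine reach_transfer hijf ?_ hfreach
        rintro a b ⟨hab, hk⟩
        by_cases hke : edgeKey a b = e
        · exact Or.inr ((edgeKey_eq_iff a b _ _).mp (hke.trans (edgeKey_self hlt).symm))
        · exact Or.inl ⟨(toggle_adj_of_ne hlt hke).mp hab, hk⟩
      have : f ∈ activeEdges G := mem_activeEdges.mpr ⟨hflt, hfG⟩
      exact absurd (Finset.min'_le _ _ this) (not_le.mpr hfe)
    have hPsi' : Psi G' = G := by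
      rw [Psi, dif_pos h', hmin, hG', toggle_toggle hlt]
    rw [hPsi]
    exact ⟨hconn, hPsi'⟩
  · have hPsi : Psi G = G := dif_neg h
    rw [hPsi, hPsi]
    exact ⟨hG, rfl⟩
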